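/- There exists a Jordan curve in ℂ whose trace has positive two-dimensional Lebesgue measure. -/

import Mathlib

open MeasureTheory Complex

set_option maxHeartbeats 1000000

noncomputable section
namespace Osgood


/-- cross product of two complex numbers as plane vectors -/
def cross (a b : ℂ) : ℝ := a.re * b.im - a.im * b.re

/-- standard closed triangle -/
def Δ : Set ℂ := {z | 0 ≤ z.re ∧ 0 ≤ z.im ∧ z.re + z.im ≤ 1}

/-- closed triangle with vertices u v w -/
def T (u v w : ℂ) : Set ℂ :=
  {z | ∃ b c : ℝ, 0 ≤ b ∧ 0 ≤ c ∧ b + c ≤ 1 ∧ z = u + (b:ℂ) * (v - u) + (c:ℂ) * (w - u)}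

lemma mem_T {u v w : ℂ} {b c : ℝ} (hb : 0 ≤ b) (hc : 0 ≤ c) (hbc : b + c ≤ 1) :
    u + (b:ℂ) * (v - u) + (c:ℂ) * (w - u) ∈ T u v w := ⟨b, c, hb, hc, hbc, rfl⟩

lemma u_mem_T (u v w : ℂ) : u ∈ T u v w := by
  have := mem_T (u := u) (v := v) (w := w) (le_refl (0:ℝ)) (le_refl (0:ℝ)) (by norm_num)
  simpa using this

lemma v_mem_T (u v w : ℂ) : v ∈ T u v w := by
  have := mem_T (u := u) (v := v) (w := w) (b := 1) (c := 0) (by norm_num) (le_refl (0:ℝ)) (by norm_num)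
  simpa using this

lemma w_mem_T (u v w : ℂ) : w ∈ T u v w := by
  have := mem_T (u := u) (v := v) (w := w) (b := 0) (c := 1) (le_refl (0:ℝ)) (by norm_num) (by norm_num)
  simpa using this

/-- a triangle whose vertices lie in `T u v w` is contained in it -/
lemma T_subset {u v w a b c : ℂ} (ha : a ∈ T u v w) (hb : b ∈ T u v w) (hc : c ∈ T u v w) :
    T a b c ⊆ T u v w := by
  rintro z ⟨s, t, hs, ht, hst, rfl⟩
  obtain ⟨ba, ca, hba, hca, hbca, rfl⟩ := ha
  obtain ⟨bb, cb, hbb, hcb, hbcb, rfl⟩ := hb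
  obtain ⟨bc, cc, hbc2, hcc, hbcc, rfl⟩ := hc
  refine ⟨(1-s-t)*ba + s*bb + t*bc, (1-s-t)*ca + s*cb + t*cc, ?_, ?_, ?_, ?_⟩
  · have h1 : 0 ≤ 1 - s - t := by linarith
    positivity
  · have h1 : 0 ≤ 1 - s - t := by linarith
    positivity
  · nlinarith
  · push_cast
    ring




lemma L0 (u v w : ℂ) (α b c : ℝ) :
    cross ((u + (b:ℂ)*(w-u) + (c:ℂ)*(u + (α:ℂ)*(v-u) - u)) - w) ((u+v)/2 - w)
      = ((1-b-c)*(1/2) + c*(1/2-α)) * cross (v-u) (w-u) := by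
  simp only [cross]
  simp [Complex.add_re, Complex.add_im, Complex.sub_re, Complex.sub_im, Complex.mul_re,
    Complex.mul_im, Complex.ofReal_re, Complex.ofReal_im, Complex.div_re, Complex.div_im]
  ring

lemma L1 (u v w : ℂ) (α b c : ℝ) :
    cross ((w + (b:ℂ)*(v-w) + (c:ℂ)*(u + ((1-α:ℝ):ℂ)*(v-u) - w)) - w) ((u+v)/2 - w)
      = (b*(-(1/2)) + c*(α-1/2)) * cross (v-u) (w-u) := by
  simp only [cross]
  simp [Complex.add_re, Complex.add_im, Complex.sub_re, Complex.sub_im, Complex.mul_re,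
    Complex.mul_im, Complex.ofReal_re, Complex.ofReal_im, Complex.div_re, Complex.div_im]
  ring

lemma Lv (u v w : ℂ) : cross (v - w) ((u+v)/2 - w) = (-(1/2)) * cross (v-u) (w-u) := by
  simp only [cross]
  simp [Complex.add_re, Complex.add_im, Complex.sub_re, Complex.sub_im, Complex.div_re,
    Complex.div_im]
  ring

lemma Lu (u v w : ℂ) : cross (u - w) ((u+v)/2 - w) = (1/2) * cross (v-u) (w-u) := by
  simp only [cross]
  simp [Complex.add_re, Complex.add_im, Complex.sub_re, Complex.sub_im, Complex.div_re,
    Complex.div_im]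
  ring

/-- separation of the two children triangles: they meet only at `w`. -/
lemma sep {u v w : ℂ} {α : ℝ} (hcr : cross (v - u) (w - u) ≠ 0)
    (h0 : 0 < α) (h2 : α < 1/2) {z : ℂ}
    (hz0 : z ∈ T u w (u + (α:ℂ) * (v - u)))
    (hz1 : z ∈ T w v (u + ((1-α:ℝ):ℂ) * (v - u))) : z = w := by
  obtain ⟨b, c, hb, hc, hbc, hzeq⟩ := hz0
  obtain ⟨b', c', hb', hc', hbc', hzeq'⟩ := hz1
  set D := cross (v - u) (w - u) with hD
  have key0 : cross (z - w) ((u+v)/2 - w) = ((1-b-c) * (1/2) + c * (1/2 - α)) * D := by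
    rw [hzeq]; exact L0 u v w α b c
  have key1 : cross (z - w) ((u+v)/2 - w) = (b' * (-(1/2)) + c' * (α - 1/2)) * D := by
    rw [hzeq']; exact L1 u v w α b' c'
  have heq : ((1-b-c) * (1/2) + c * (1/2 - α)) * D = (b' * (-(1/2)) + c' * (α - 1/2)) * D :=
    key0.symm.trans key1
  have hAB := mul_right_cancel₀ hcr heq
  have t1 : 0 ≤ (1-b-c) * (1/2) := by nlinarith
  have t2 : 0 ≤ c * (1/2 - α) := mul_nonneg hc (by linarith)
  have t3 : b' * (-(1/2)) ≤ 0 := by nlinarith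
  have t4 : c' * (α - 1/2) ≤ 0 := by nlinarith
  have hcz : c = 0 := by nlinarith
  have hb1 : b = 1 := by nlinarith
  rw [hzeq, hcz, hb1]; push_cast; ring

/-- the vertex v of the parent is not in child0 -/
lemma v_not_mem_child0 {u v w : ℂ} {α : ℝ} (hcr : cross (v - u) (w - u) ≠ 0)
    (h0 : 0 < α) (h2 : α < 1/2) :
    v ∉ T u w (u + (α:ℂ) * (v - u)) := by
  rintro ⟨b, c, hb, hc, hbc, hzeq⟩
  set D := cross (v - u) (w - u) with hD
  have key0 := L0 u v w α b c
  rw [← hzeq] at key0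
  have key1 := Lv u v w
  have heq : ((1-b-c) * (1/2) + c * (1/2 - α)) * D = (-(1/2)) * D := key0.symm.trans key1
  have hAB := mul_right_cancel₀ hcr heq
  have t1 : 0 ≤ (1-b-c) * (1/2) := by nlinarith
  have t2 : 0 ≤ c * (1/2 - α) := mul_nonneg hc (by linarith)
  linarith

/-- the vertex u of the parent is not in child1 -/
lemma u_not_mem_child1 {u v w : ℂ} {α : ℝ} (hcr : cross (v - u) (w - u) ≠ 0)
    (h0 : 0 < α) (h2 : α < 1/2) :
    u ∉ T w v (u + ((1-α:ℝ):ℂ) * (v - u)) := by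
  rintro ⟨b, c, hb, hc, hbc, hzeq⟩
  set D := cross (v - u) (w - u) with hD
  have key1 := L1 u v w α b c
  rw [← hzeq] at key1
  have key0 := Lu u v w
  have heq : (1/2) * D = (b * (-(1/2)) + c * (α - 1/2)) * D := key0.symm.trans key1
  have hAB := mul_right_cancel₀ hcr heq
  have t3 : b * (-(1/2)) ≤ 0 := by nlinarith
  have t4 : c * (α - 1/2) ≤ 0 := by nlinarith
  linarith



/-- Shape control: triangle (u,v,w) has shape close to (1+σi)/2 with tolerance r. -/
def Good (σ r : ℝ) (u v w : ℂ) : Prop :=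
  v - u ≠ 0 ∧
    ‖(w-u) - ((1+(σ:ℂ)*I)/2)*(v-u)‖ ≤ r * ‖(w-u) - ((1-(σ:ℂ)*I)/2)*(v-u)‖

lemma abs_one_of_sq {σ : ℝ} (hσ : σ^2 = 1) : |σ| = 1 := by
  rcases abs_cases σ with ⟨h, _⟩ | ⟨h, _⟩ <;> nlinarith [abs_nonneg σ]

lemma norm_sigma_I_mul {σ : ℝ} (hσ : σ^2 = 1) (z : ℂ) : ‖(σ:ℂ)*I*z‖ = ‖z‖ := by
  rw [norm_mul, norm_mul, Complex.norm_real, Complex.norm_I, Real.norm_eq_abs,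
    abs_one_of_sq hσ]
  ring

lemma c_facts {σ : ℝ} (hσ : σ^2 = 1) :
    ‖((1+(σ:ℂ)*I)/2)‖^2 = 1/2 ∧ ‖((1-(σ:ℂ)*I)/2)‖^2 = 1/2 ∧
    ‖((1+(σ:ℂ)*I)/2)‖ = ‖((1-(σ:ℂ)*I)/2)‖ := by
  have h1 : ‖((1+(σ:ℂ)*I)/2)‖^2 = 1/2 := by
    rw [Complex.sq_norm]
    simp [Complex.normSq_apply, Complex.div_re, Complex.div_im, Complex.add_re, Complex.add_im,
      Complex.mul_re, Complex.mul_im, Complex.normSq]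
    nlinarith
  have h2 : ‖((1-(σ:ℂ)*I)/2)‖^2 = 1/2 := by
    rw [Complex.sq_norm]
    simp [Complex.normSq_apply, Complex.div_re, Complex.div_im, Complex.sub_re, Complex.sub_im,
      Complex.mul_re, Complex.mul_im, Complex.normSq]
    nlinarith
  refine ⟨h1, h2, ?_⟩
  nlinarith [norm_nonneg ((1+(σ:ℂ)*I)/2), norm_nonneg ((1-(σ:ℂ)*I)/2)]

lemma good_step {σ r ε : ℝ} {u v w : ℂ} (hσ : σ^2 = 1)
    (hr0 : 0 ≤ r) (hr : r ≤ 1/16) (hε0 : 0 < ε) (hε : ε ≤ 1/64)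
    (hg : Good σ r u v w) :
    Good (-σ) (r + 2*ε) u w (u + (((1-ε)/2:ℝ):ℂ)*(v-u)) ∧
    Good (-σ) (r + 2*ε) w v (u + (((1+ε)/2:ℝ):ℂ)*(v-u)) := by
  obtain ⟨huv, hP⟩ := hg
  set sp : ℂ := (1+(σ:ℂ)*I)/2 with hsp
  set sm : ℂ := (1-(σ:ℂ)*I)/2 with hsm
  obtain ⟨hc1, hc2, hcc⟩ := c_facts hσ
  set c : ℝ := ‖sp‖ with hcdef
  have hc0 : 0 ≤ c := norm_nonneg _
  have hclb : (7:ℝ)/10 ≤ c := by nlinarith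
  have hcub : c ≤ (71:ℝ)/100 := by nlinarith
  have hSJ : ((σ:ℂ))^2 * I^2 = -1 := by
    have h1 : ((σ:ℂ))^2 = 1 := by
      have := congrArg (fun x : ℝ => (x:ℂ)) hσ
      push_cast at this; exact this
    rw [h1, Complex.I_sq]; ring
  set P : ℝ := ‖(w-u) - sp*(v-u)‖ with hPdef
  set Q : ℝ := ‖(w-u) - sm*(v-u)‖ with hQdef
  set L : ℝ := ‖v-u‖ with hLdef
  have hL0 : 0 < L := by simpa [hLdef, norm_pos_iff] using huv
  have hP0 : 0 ≤ P := norm_nonneg _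
  have hQ0 : 0 ≤ Q := norm_nonneg _
  have hQPL : Q ≤ P + L := by
    have hid : (w-u) - sm*(v-u) = ((w-u) - sp*(v-u)) + (σ:ℂ)*I*(v-u) := by
      rw [hsm, hsp]; ring
    calc Q = ‖((w-u) - sp*(v-u)) + (σ:ℂ)*I*(v-u)‖ := by rw [hQdef, hid]
    _ ≤ P + ‖(σ:ℂ)*I*(v-u)‖ := norm_add_le _ _
    _ = P + L := by rw [norm_sigma_I_mul hσ]
  have hL17 : L ≤ (17/16)*Q := by
    have hid : (σ:ℂ)*I*(v-u) = ((w-u) - sm*(v-u)) - ((w-u) - sp*(v-u)) := by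
      rw [hsm, hsp]; ring
    have hLQP : L ≤ Q + P := by
      calc L = ‖((w-u) - sm*(v-u)) - ((w-u) - sp*(v-u))‖ := by
            rw [← hid, norm_sigma_I_mul hσ]
      _ ≤ Q + P := norm_sub_le _ _
    nlinarith [mul_le_mul_of_nonneg_right hr hQ0]
  have hQpos : 0 < Q := by nlinarith
  -- identities
  have idA : (((1-ε)/2:ℝ):ℂ)*(v-u) - sm*(w-u)
      = -sm * ((w-u) - sp*(v-u)) - ((ε:ℂ)/2)*(v-u) := by
    rw [hsm, hsp]; push_cast
    linear_combination ((v-u)/4) * hSJ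
  have idB : (((1-ε)/2:ℝ):ℂ)*(v-u) - sp*(w-u)
      = -sp * ((w-u) - sm*(v-u)) - ((ε:ℂ)/2)*(v-u) := by
    rw [hsm, hsp]; push_cast
    linear_combination ((v-u)/4) * hSJ
  have hεL : ‖((ε:ℂ)/2)*(v-u)‖ = (ε/2) * L := by
    rw [norm_mul, norm_div]
    simp [Complex.norm_real, Real.norm_eq_abs, abs_of_pos hε0, hLdef]
  have hX0 : ‖(((1-ε)/2:ℝ):ℂ)*(v-u) - sm*(w-u)‖ ≤ c * P + (ε/2) * L := by
    rw [idA]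
    calc ‖-sm * ((w-u) - sp*(v-u)) - ((ε:ℂ)/2)*(v-u)‖
        ≤ ‖-sm * ((w-u) - sp*(v-u))‖ + ‖((ε:ℂ)/2)*(v-u)‖ := norm_sub_le _ _
    _ = c * P + (ε/2) * L := by rw [norm_mul, norm_neg, ← hcc, hεL, hPdef, hcdef]
  have hY0 : c * Q - (ε/2) * L ≤ ‖(((1-ε)/2:ℝ):ℂ)*(v-u) - sp*(w-u)‖ := by
    rw [idB]
    have h1 : ‖-sp * ((w-u) - sm*(v-u))‖ = c * Q := by
      rw [norm_mul, norm_neg, hQdef, hcdef]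
    have := norm_sub_norm_le (-sp * ((w-u) - sm*(v-u))) (((ε:ℂ)/2)*(v-u))
    rw [h1, hεL] at this
    linarith
  -- the main numeric inequality
  have hnum : c * P + (ε/2) * L ≤ (r + 2*ε) * (c * Q - (ε/2) * L) := by
    have hεQ : 0 ≤ ε * Q := mul_nonneg hε0.le hQ0
    nlinarith [mul_le_mul_of_nonneg_left hP hc0,
      mul_le_mul_of_nonneg_left hL17 (show (0:ℝ) ≤ ε/2 by positivity),
      mul_le_mul_of_nonneg_left hL17 (show (0:ℝ) ≤ (r+2*ε)*(ε/2) by positivity),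
      mul_le_mul_of_nonneg_right hclb hεQ,
      mul_le_mul_of_nonneg_right hr hεQ,
      mul_le_mul_of_nonneg_right hε hεQ,
      mul_le_mul_of_nonneg_right hr0 hεQ, hεQ]
  have hrε0 : (0:ℝ) ≤ r + 2*ε := by linarith
  -- nondegeneracy of children
  have hwu : w - u ≠ 0 := by
    intro h
    have h2 : P = c * L := by
      rw [hPdef, h, zero_sub, norm_neg, norm_mul, hcdef, hLdef]
    have k1 : Q ≤ c*L + L := by linarith
    have k2 : P ≤ r*(c*L + L) :=
      le_trans hP (mul_le_mul_of_nonneg_left k1 hr0)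
    have k3 : r*(c*L+L) ≤ (1/16)*(c*L+L) := by
      have : (0:ℝ) ≤ c*L + L := by positivity
      exact mul_le_mul_of_nonneg_right hr this
    have k5 : (7/10)*L ≤ c*L := mul_le_mul_of_nonneg_right hclb hL0.le
    have k6 : c*L ≤ (71/100)*L := mul_le_mul_of_nonneg_right hcub hL0.le
    linarith
  have hvw : v - w ≠ 0 := by
    intro h
    have hid : sm*(v-u) - ((w-u) - sp*(v-u)) = v - w := by rw [hsm, hsp]; ring
    have h1 : ‖sm*(v-u)‖ = c * L := by rw [norm_mul, ← hcc, hcdef, hLdef]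
    have h2 : ‖sm*(v-u) - ((w-u) - sp*(v-u))‖ = 0 := by rw [hid, h, norm_zero]
    have h3 := norm_sub_norm_le (sm*(v-u)) ((w-u) - sp*(v-u))
    rw [h2, h1] at h3
    have k1 : P ≤ r*(P+L) := le_trans hP (mul_le_mul_of_nonneg_left hQPL hr0)
    have k2 : r*(P+L) ≤ (1/16)*(P+L) :=
      mul_le_mul_of_nonneg_right hr (add_nonneg hP0 hL0.le)
    have k5 : (7/10)*L ≤ c*L := mul_le_mul_of_nonneg_right hclb hL0.le
    linarith
  constructor
  · refine ⟨hwu, ?_⟩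
    have hrw : (1+((-σ:ℝ):ℂ)*I)/2 = sm := by rw [hsm]; push_cast; ring
    have hrw2 : (1-((-σ:ℝ):ℂ)*I)/2 = sp := by rw [hsp]; push_cast; ring
    rw [hrw, hrw2]
    have e1 : u + (((1-ε)/2:ℝ):ℂ)*(v-u) - u = (((1-ε)/2:ℝ):ℂ)*(v-u) := by ring
    rw [e1]
    calc ‖(((1-ε)/2:ℝ):ℂ)*(v-u) - sm*(w-u)‖ ≤ c * P + (ε/2) * L := hX0
    _ ≤ (r + 2*ε) * (c * Q - (ε/2) * L) := hnum
    _ ≤ (r + 2*ε) * ‖(((1-ε)/2:ℝ):ℂ)*(v-u) - sp*(w-u)‖ :=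
        mul_le_mul_of_nonneg_left hY0 hrε0
  · refine ⟨hvw, ?_⟩
    have hrw : (1+((-σ:ℝ):ℂ)*I)/2 = sm := by rw [hsm]; push_cast; ring
    have hrw2 : (1-((-σ:ℝ):ℂ)*I)/2 = sp := by rw [hsp]; push_cast; ring
    rw [hrw, hrw2]
    have idC : u + (((1+ε)/2:ℝ):ℂ)*(v-u) - w - sm*(v-w)
        = -sp * ((w-u) - sp*(v-u)) + ((ε:ℂ)/2)*(v-u) := by
      rw [hsm, hsp]; push_cast
      linear_combination (-(v-u)/4) * hSJ
    have idD : u + (((1+ε)/2:ℝ):ℂ)*(v-u) - w - sp*(v-w)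
        = -sm * ((w-u) - sm*(v-u)) + ((ε:ℂ)/2)*(v-u) := by
      rw [hsm, hsp]; push_cast
      linear_combination (-(v-u)/4) * hSJ
    have hX1 : ‖u + (((1+ε)/2:ℝ):ℂ)*(v-u) - w - sm*(v-w)‖ ≤ c * P + (ε/2) * L := by
      rw [idC]
      calc ‖-sp * ((w-u) - sp*(v-u)) + ((ε:ℂ)/2)*(v-u)‖
          ≤ ‖-sp * ((w-u) - sp*(v-u))‖ + ‖((ε:ℂ)/2)*(v-u)‖ := norm_add_le _ _
      _ = c * P + (ε/2) * L := by rw [norm_mul, norm_neg, hεL, hPdef, hcdef]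
    have hY1 : c * Q - (ε/2) * L ≤ ‖u + (((1+ε)/2:ℝ):ℂ)*(v-u) - w - sp*(v-w)‖ := by
      rw [idD]
      have h1 : ‖-sm * ((w-u) - sm*(v-u))‖ = c * Q := by
        rw [norm_mul, norm_neg, ← hcc, hQdef, hcdef]
      have h3 := norm_sub_norm_le (-sm * ((w-u) - sm*(v-u))) (-(((ε:ℂ)/2)*(v-u)))
      rw [h1, norm_neg, hεL] at h3
      have e : -sm * ((w-u) - sm*(v-u)) - -(((ε:ℂ)/2)*(v-u))
          = -sm * ((w-u) - sm*(v-u)) + ((ε:ℂ)/2)*(v-u) := by ring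
      rw [e] at h3
      linarith
    calc ‖u + (((1+ε)/2:ℝ):ℂ)*(v-u) - w - sm*(v-w)‖ ≤ c * P + (ε/2) * L := hX1
    _ ≤ (r + 2*ε) * (c * Q - (ε/2) * L) := hnum
    _ ≤ (r + 2*ε) * ‖u + (((1+ε)/2:ℝ):ℂ)*(v-u) - w - sp*(v-w)‖ :=
        mul_le_mul_of_nonneg_left hY1 hrε0

/-- consequences of Good used for diameter decay -/
lemma good_diam {σ r : ℝ} {u v w : ℂ} (hσ : σ^2 = 1)
    (hr0 : 0 ≤ r) (hr : r ≤ 1/32) (hg : Good σ r u v w) :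
    ‖w - u‖ ≤ (3/4) * ‖v - u‖ ∧ ‖v - w‖ ≤ (3/4) * ‖v - u‖ := by
  obtain ⟨huv, hP⟩ := hg
  set sp : ℂ := (1+(σ:ℂ)*I)/2 with hsp
  set sm : ℂ := (1-(σ:ℂ)*I)/2 with hsm
  obtain ⟨hc1, hc2, hcc⟩ := c_facts hσ
  set c : ℝ := ‖sp‖ with hcdef
  have hc0 : 0 ≤ c := norm_nonneg _
  have hcub : c ≤ (71:ℝ)/100 := by nlinarith
  set P : ℝ := ‖(w-u) - sp*(v-u)‖ with hPdef
  set Q : ℝ := ‖(w-u) - sm*(v-u)‖ with hQdef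
  set L : ℝ := ‖v-u‖ with hLdef
  have hL0 : 0 ≤ L := norm_nonneg _
  have hP0 : 0 ≤ P := norm_nonneg _
  have hQ0 : 0 ≤ Q := norm_nonneg _
  have hQPL : Q ≤ P + L := by
    have hid : (w-u) - sm*(v-u) = ((w-u) - sp*(v-u)) + (σ:ℂ)*I*(v-u) := by
      rw [hsm, hsp]; ring
    calc Q = ‖((w-u) - sp*(v-u)) + (σ:ℂ)*I*(v-u)‖ := by rw [hQdef, hid]
    _ ≤ P + ‖(σ:ℂ)*I*(v-u)‖ := norm_add_le _ _
    _ = P + L := by rw [norm_sigma_I_mul hσ]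
  have hPL : P ≤ (1/31) * L := by
    nlinarith [mul_le_mul_of_nonneg_left hQPL hr0,
      mul_le_mul_of_nonneg_right hr (add_nonneg hP0 hL0)]
  constructor
  · have hid : w - u = ((w-u) - sp*(v-u)) + sp*(v-u) := by ring
    calc ‖w - u‖ = ‖((w-u) - sp*(v-u)) + sp*(v-u)‖ := by rw [← hid]
    _ ≤ P + ‖sp*(v-u)‖ := norm_add_le _ _
    _ = P + c * L := by rw [norm_mul, hcdef, hLdef]
    _ ≤ (3/4) * L := by nlinarith [mul_le_mul_of_nonneg_right hcub hL0]
  · have hid : v - w = sm*(v-u) - ((w-u) - sp*(v-u)) := by rw [hsm, hsp]; ring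
    calc ‖v - w‖ = ‖sm*(v-u) - ((w-u) - sp*(v-u))‖ := by rw [← hid]
    _ ≤ ‖sm*(v-u)‖ + P := norm_sub_le _ _
    _ = c * L + P := by rw [norm_mul, ← hcc, hcdef, hLdef]
    _ ≤ (3/4) * L := by nlinarith [mul_le_mul_of_nonneg_right hcub hL0]


-- ### the construction
def eps (n : ℕ) : ℝ := (1/2)^(n+7)
def alp (n : ℕ) : ℝ := (1 - eps n)/2
def rho (n : ℕ) : ℝ := (1 - (1/2:ℝ)^n)/32

lemma eps_pos (n : ℕ) : 0 < eps n := by simp only [eps]; positivity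
lemma eps_le (n : ℕ) : eps n ≤ 1/64 := by
  simp only [eps]
  have h : (1/2:ℝ)^(n+7) ≤ (1/2:ℝ)^7 :=
    pow_le_pow_of_le_one (by norm_num) (by norm_num) (by omega)
  have h2 : ((1:ℝ)/2)^7 ≤ 1/64 := by norm_num
  exact (le_trans h h2)
lemma rho_nonneg (n : ℕ) : 0 ≤ rho n := by
  have : (1/2:ℝ)^n ≤ 1 := pow_le_one₀ (by norm_num) (by norm_num)
  simp only [rho]; linarith
lemma rho_le (n : ℕ) : rho n ≤ 1/32 := by
  have : (0:ℝ) < (1/2)^n := by positivity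
  simp only [rho]; linarith
lemma rho_succ (n : ℕ) : rho (n+1) = rho n + 2 * eps n := by
  simp only [rho, eps, pow_succ]; ring
lemma alp_pos (n : ℕ) : 0 < alp n := by
  have := eps_le n; simp only [alp]; linarith
lemma alp_lt_half (n : ℕ) : alp n < 1/2 := by
  have := eps_pos n; simp only [alp]; linarith
lemma alp_le_one (n : ℕ) : alp n ≤ 1 := by
  have := eps_pos n; simp only [alp]; linarith

def node : ℕ → ℕ → ℂ × ℂ × ℂ
  | 0, _ => (0, 1, (1 + I)/2)
  | (n+1), k =>
      let p := node n (k/2)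
      if k % 2 = 0 then (p.1, p.2.2, p.1 + ((alp n : ℝ):ℂ) * (p.2.1 - p.1))
      else (p.2.2, p.2.1, p.1 + ((1 - alp n : ℝ):ℂ) * (p.2.1 - p.1))

def U (n k : ℕ) : ℂ := (node n k).1
def V (n k : ℕ) : ℂ := (node n k).2.1
def W (n k : ℕ) : ℂ := (node n k).2.2

lemma node_even (n m : ℕ) : node (n+1) (2*m)
    = (U n m, W n m, U n m + ((alp n : ℝ):ℂ) * (V n m - U n m)) := by
  simp [node, Nat.mul_mod_right, Nat.mul_div_cancel_left, U, V, W]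

lemma node_odd (n m : ℕ) : node (n+1) (2*m+1)
    = (W n m, V n m, U n m + ((1 - alp n : ℝ):ℂ) * (V n m - U n m)) := by
  have h1 : (2*m+1) % 2 = 1 := by omega
  have h2 : (2*m+1) / 2 = m := by omega
  simp [node, h1, h2, U, V, W]

lemma U_def (n k : ℕ) : U n k = (node n k).1 := rfl
lemma V_def (n k : ℕ) : V n k = (node n k).2.1 := rfl
lemma W_def (n k : ℕ) : W n k = (node n k).2.2 := rfl

lemma node_even' (n k : ℕ) (hk : k % 2 = 0) :
    U (n+1) k = U n (k/2) ∧ V (n+1) k = W n (k/2) ∧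
    W (n+1) k = U n (k/2) + ((alp n : ℝ):ℂ) * (V n (k/2) - U n (k/2)) := by
  have hke : k = 2*(k/2) := by omega
  have h := node_even n (k/2)
  rw [← hke] at h
  exact ⟨by rw [U_def, h], by rw [V_def, h], by rw [W_def, h]⟩

lemma node_odd' (n k : ℕ) (hk : k % 2 = 1) :
    U (n+1) k = W n (k/2) ∧ V (n+1) k = V n (k/2) ∧
    W (n+1) k = U n (k/2) + ((1 - alp n : ℝ):ℂ) * (V n (k/2) - U n (k/2)) := by
  have hke : k = 2*(k/2)+1 := by omega
  have h := node_odd n (k/2)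
  rw [← hke] at h
  exact ⟨by rw [U_def, h], by rw [V_def, h], by rw [W_def, h]⟩

lemma parity_split (n k : ℕ) : (k % 2 = 0 ∧ k = 2*(k/2)) ∨ (k % 2 = 1 ∧ k = 2*(k/2)+1) := by
  omega

lemma sq_neg_one_pow (n : ℕ) : ((-1:ℝ)^n)^2 = 1 := by
  rw [← pow_mul, mul_comm, pow_mul]
  norm_num

lemma node_good : ∀ n k, Good ((-1)^n) (rho n) (U n k) (V n k) (W n k) := by
  intro n
  induction n with
  | zero =>
    intro k
    constructor
    · simp [U, V, node]
    · simp [U, V, W, node, rho]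
  | succ n ih =>
    intro k
    have hσ := sq_neg_one_pow n
    have hstep := good_step hσ (rho_nonneg n) ((rho_le n).trans (by norm_num))
      (eps_pos n) (eps_le n) (ih (k/2))
    have hsgn : ((-1:ℝ)^(n+1)) = -((-1:ℝ)^n) := by ring
    rcases parity_split n k with ⟨hk, hke⟩ | ⟨hk, hke⟩
    · obtain ⟨h1, h2, h3⟩ := node_even' n k hk
      rw [h1, h2, h3, hsgn, rho_succ]
      have : ((alp n : ℝ):ℂ) = (((1 - eps n)/2 : ℝ):ℂ) := by norm_cast
      rw [this]
      exact hstep.1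
    · obtain ⟨h1, h2, h3⟩ := node_odd' n k hk
      rw [h1, h2, h3, hsgn, rho_succ]
      have : ((1 - alp n : ℝ):ℂ) = (((1 + eps n)/2 : ℝ):ℂ) := by
        have : (1:ℝ) - alp n = (1 + eps n)/2 := by simp [alp]; ring
        rw [this]
      rw [this]
      exact hstep.2

lemma node_len : ∀ n k, ‖V n k - U n k‖ ≤ (3/4)^n := by
  intro n
  induction n with
  | zero =>
    intro k
    simp [U, V, node]
  | succ n ih =>
    intro k
    have hσ := sq_neg_one_pow n
    have hdiam := good_diam hσ (rho_nonneg n) (rho_le n) (node_good n (k/2))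
    rcases parity_split n k with ⟨hk, hke⟩ | ⟨hk, hke⟩
    · obtain ⟨g1, g2, g3⟩ := node_even' n k hk
      have h1 : V (n+1) k - U (n+1) k = W n (k/2) - U n (k/2) := by rw [g1, g2]
      rw [h1, pow_succ]
      calc ‖W n (k/2) - U n (k/2)‖ ≤ (3/4) * ‖V n (k/2) - U n (k/2)‖ := hdiam.1
      _ ≤ (3/4) * (3/4)^n := by nlinarith [ih (k/2)]
      _ = (3/4)^n * (3/4) := by ring
    · obtain ⟨g1, g2, g3⟩ := node_odd' n k hk
      have h1 : V (n+1) k - U (n+1) k = V n (k/2) - W n (k/2) := by rw [g1, g2]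
      rw [h1, pow_succ]
      calc ‖V n (k/2) - W n (k/2)‖ ≤ (3/4) * ‖V n (k/2) - U n (k/2)‖ := hdiam.2
      _ ≤ (3/4) * (3/4)^n := by nlinarith [ih (k/2)]
      _ = (3/4)^n * (3/4) := by ring

-- exact cross recursion
lemma cross_child0 (u v w : ℂ) (α : ℝ) :
    cross (w - u) ((u + (α:ℂ)*(v-u)) - u) = -α * cross (v-u) (w-u) := by
  simp [cross, Complex.add_re, Complex.add_im, Complex.sub_re, Complex.sub_im, Complex.mul_re,
    Complex.mul_im, Complex.ofReal_re, Complex.ofReal_im]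
  ring

lemma cross_child1 (u v w : ℂ) (α : ℝ) :
    cross (v - w) ((u + ((1-α:ℝ):ℂ)*(v-u)) - w) = -α * cross (v-u) (w-u) := by
  simp [cross, Complex.add_re, Complex.add_im, Complex.sub_re, Complex.sub_im, Complex.mul_re,
    Complex.mul_im, Complex.ofReal_re, Complex.ofReal_im]
  ring

lemma node_cross : ∀ n k, cross (V n k - U n k) (W n k - U n k)
    = (-1)^n * (1/2) * ∏ j ∈ Finset.range n, alp j := by
  intro n
  induction n with
  | zero =>
    intro k
    simp [U, V, W, node, cross]
  | succ n ih =>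
    intro k
    rw [Finset.prod_range_succ]
    rcases parity_split n k with ⟨hk, hke⟩ | ⟨hk, hke⟩
    · obtain ⟨h1, h2, h3⟩ := node_even' n k hk
      rw [h1, h2, h3, cross_child0, ih (k/2)]
      ring
    · obtain ⟨h1, h2, h3⟩ := node_odd' n k hk
      rw [h1, h2, h3, cross_child1, ih (k/2)]
      ring

lemma prod_alp_pos (n : ℕ) : 0 < ∏ j ∈ Finset.range n, alp j :=
  Finset.prod_pos (fun j _ => alp_pos j)

lemma node_cross_ne (n k : ℕ) : cross (V n k - U n k) (W n k - U n k) ≠ 0 := by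
  rw [node_cross]
  have h1 := prod_alp_pos n
  rcases Nat.even_or_odd n with he | ho
  · rw [he.neg_one_pow]; positivity
  · rw [ho.neg_one_pow]
    intro h
    nlinarith

-- chain lemma
lemma chain : ∀ n k, k + 1 < 2^n → V n k = U n (k+1) := by
  intro n
  induction n with
  | zero => intro k hk; omega
  | succ n ih =>
    intro k hk
    rcases parity_split n k with ⟨hpar, hke⟩ | ⟨hpar, hke⟩
    · -- k = 2m, k+1 = 2m+1
      have e1 := (node_even' n k hpar).2.1
      have hpar1 : (k+1) % 2 = 1 := by omega
      have e2 := (node_odd' n (k+1) hpar1).1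
      have hdiv : (k+1)/2 = k/2 := by omega
      rw [e1, e2, hdiv]
    · -- k = 2m+1, k+1 = 2(m+1)
      have e1 := (node_odd' n k hpar).2.1
      have hpar1 : (k+1) % 2 = 0 := by omega
      have e2 := (node_even' n (k+1) hpar1).1
      have hdiv : (k+1)/2 = k/2 + 1 := by omega
      rw [e1, e2, hdiv]
      exact ih (k/2) (by omega)

-- boundary values
lemma U_zero : ∀ n, U n 0 = 0 := by
  intro n
  induction n with
  | zero => simp [U, node]
  | succ n ih =>
    have e := (node_even' n 0 (by norm_num)).1
    simpa [e] using ih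

lemma V_last : ∀ n, V n (2^n - 1) = 1 := by
  intro n
  induction n with
  | zero => simp [V, node]
  | succ n ih =>
    have hpow : 1 ≤ 2^n := Nat.one_le_two_pow
    have hpar : (2^(n+1) - 1) % 2 = 1 := by
      have : 2^(n+1) = 2*2^n := by rw [pow_succ]; ring
      omega
    have e := (node_odd' n (2^(n+1) - 1) hpar).2.1
    have hdiv : (2^(n+1) - 1)/2 = 2^n - 1 := by
      have : 2^(n+1) = 2*2^n := by rw [pow_succ]; ring
      omega
    rw [e, hdiv]
    exact ih

-- ### regions
def R (n k : ℕ) : Set ℂ := T (U n k) (V n k) (W n k)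

lemma U_mem_R (n k : ℕ) : U n k ∈ R n k := u_mem_T _ _ _
lemma V_mem_R (n k : ℕ) : V n k ∈ R n k := v_mem_T _ _ _

lemma R_succ_subset (n k : ℕ) : R (n+1) k ⊆ R n (k/2) := by
  rcases parity_split n k with ⟨hk, _⟩ | ⟨hk, _⟩
  · obtain ⟨h1, h2, h3⟩ := node_even' n k hk
    rw [R, h1, h2, h3]
    apply T_subset (u_mem_T _ _ _) (w_mem_T _ _ _)
    have he : U n (k/2) + ((alp n : ℝ):ℂ) * (V n (k/2) - U n (k/2))
        = U n (k/2) + ((alp n : ℝ):ℂ) * (V n (k/2) - U n (k/2))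
          + ((0:ℝ):ℂ) * (W n (k/2) - U n (k/2)) := by push_cast; ring
    rw [he]
    exact mem_T (alp_pos n).le (le_refl 0) (by linarith [alp_le_one n])
  · obtain ⟨h1, h2, h3⟩ := node_odd' n k hk
    rw [R, h1, h2, h3]
    apply T_subset (w_mem_T _ _ _) (v_mem_T _ _ _)
    have he : U n (k/2) + ((1 - alp n : ℝ):ℂ) * (V n (k/2) - U n (k/2))
        = U n (k/2) + ((1 - alp n : ℝ):ℂ) * (V n (k/2) - U n (k/2))
          + ((0:ℝ):ℂ) * (W n (k/2) - U n (k/2)) := by push_cast; ring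
    rw [he]
    exact mem_T (by linarith [alp_le_one n]) (le_refl 0) (by linarith [alp_pos n])

/-- distance bound inside a region -/
lemma R_diam {n k : ℕ} {z z' : ℂ} (hz : z ∈ R n k) (hz' : z' ∈ R n k) :
    ‖z - z'‖ ≤ 2 * (3/4)^n := by
  have hwb : ‖W n k - U n k‖ ≤ (3/4)^n := by
    rcases Nat.even_or_odd n with he | ho
    all_goals {
      have hg := node_good n k
      have hd := good_diam (sq_neg_one_pow n) (rho_nonneg n) (rho_le n) hg
      exact le_trans hd.1 (by nlinarith [node_len n k, norm_nonneg (V n k - U n k)])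
    }
  have key : ∀ y ∈ R n k, ‖y - U n k‖ ≤ (3/4)^n := by
    rintro y ⟨b, c, hb, hc, hbc, rfl⟩
    have h1 : U n k + (b:ℂ)*(V n k - U n k) + (c:ℂ)*(W n k - U n k) - U n k
        = (b:ℂ)*(V n k - U n k) + (c:ℂ)*(W n k - U n k) := by ring
    rw [h1]
    calc ‖(b:ℂ)*(V n k - U n k) + (c:ℂ)*(W n k - U n k)‖
        ≤ ‖(b:ℂ)*(V n k - U n k)‖ + ‖(c:ℂ)*(W n k - U n k)‖ := norm_add_le _ _
    _ = b * ‖V n k - U n k‖ + c * ‖W n k - U n k‖ := by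
        rw [norm_mul, norm_mul, Complex.norm_real, Complex.norm_real, Real.norm_eq_abs,
          Real.norm_eq_abs, _root_.abs_of_nonneg hb, _root_.abs_of_nonneg hc]
    _ ≤ (3/4)^n := by
        have h2 := node_len n k
        have h3 : (0:ℝ) ≤ (3/4)^n := by positivity
        nlinarith [norm_nonneg (V n k - U n k), norm_nonneg (W n k - U n k)]
  calc ‖z - z'‖ = ‖(z - U n k) - (z' - U n k)‖ := by ring_nf
  _ ≤ ‖z - U n k‖ + ‖z' - U n k‖ := norm_sub_le _ _
  _ ≤ 2 * (3/4)^n := by linarith [key z hz, key z' hz']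

/-- Same-level intersection structure -/
lemma same_level : ∀ n k l z, k < l → l < 2^n → z ∈ R n k → z ∈ R n l →
    l = k + 1 ∧ z = V n k := by
  intro n
  induction n with
  | zero => intro k l z hkl hl; omega
  | succ n ih =>
    intro k l z hkl hl hzk hzl
    have hl2 : l/2 < 2^n := by
      have : 2^(n+1) = 2*2^n := by rw [pow_succ]; ring
      omega
    have hcr := node_cross_ne n (k/2)
    by_cases hm : k/2 = l/2
    · -- same parent: k = 2m, l = 2m+1
      have hk2 : k % 2 = 0 := by omega
      have hl2' : l % 2 = 1 := by omega
      have hleq : l = k + 1 := by omega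
      obtain ⟨e1, e2, e3⟩ := node_even' n k hk2
      obtain ⟨f1, f2, f3⟩ := node_odd' n l hl2'
      rw [R, e1, e2, e3] at hzk
      rw [R, f1, f2, f3, ← hm] at hzl
      have hz := sep hcr (alp_pos n) (alp_lt_half n) hzk hzl
      exact ⟨hleq, by rw [e2, hz]⟩
    · -- different parents
      have hmlt : k/2 < l/2 := by omega
      have hpk := R_succ_subset n k hzk
      have hpl := R_succ_subset n l hzl
      obtain ⟨hadj, hzv⟩ := ih (k/2) (l/2) z hmlt hl2 hpk hpl
      -- z = V n (k/2) = U n (l/2)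
      have hchain : V n (k/2) = U n (l/2) := by
        rw [hadj] at hl2 ⊢
        exact chain n (k/2) hl2
      rcases parity_split n k with ⟨hk2, _⟩ | ⟨hk2, _⟩
      · -- k even: z = V n (k/2) ∉ child0 of k/2  → contradiction
        exfalso
        obtain ⟨e1, e2, e3⟩ := node_even' n k hk2
        rw [R, e1, e2, e3] at hzk
        rw [hzv] at hzk
        exact v_not_mem_child0 (node_cross_ne n (k/2)) (alp_pos n) (alp_lt_half n) hzk
      · rcases parity_split n l with ⟨hle, _⟩ | ⟨hle, _⟩
        · -- k odd, l even: adjacent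
          have hleq : l = k + 1 := by omega
          obtain ⟨e1, e2, e3⟩ := node_odd' n k hk2
          refine ⟨hleq, ?_⟩
          rw [e2, hzv]
        · -- l odd: z = U n (l/2) ∉ child1 of l/2 → contradiction
          exfalso
          obtain ⟨f1, f2, f3⟩ := node_odd' n l hle
          rw [R, f1, f2, f3] at hzl
          rw [hzv, hchain] at hzl
          exact u_not_mem_child1 (node_cross_ne n (l/2)) (alp_pos n) (alp_lt_half n) hzl

-- ### compactness of triangles
lemma Δ_isCompact : IsCompact Δ := by
  apply Metric.isCompact_of_isClosed_isBounded
  · have h1 : IsClosed {z : ℂ | 0 ≤ z.re} := isClosed_le continuous_const Complex.continuous_re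
    have h2 : IsClosed {z : ℂ | 0 ≤ z.im} := isClosed_le continuous_const Complex.continuous_im
    have h3 : IsClosed {z : ℂ | z.re + z.im ≤ 1} :=
      isClosed_le (Complex.continuous_re.add Complex.continuous_im) continuous_const
    have : Δ = {z : ℂ | 0 ≤ z.re} ∩ ({z : ℂ | 0 ≤ z.im} ∩ {z : ℂ | z.re + z.im ≤ 1}) := rfl
    rw [this]
    exact h1.inter (h2.inter h3)
  · apply Bornology.IsBounded.subset (Metric.isBounded_closedBall (x := (0:ℂ)) (r := 2))
    rintro z ⟨h1, h2, h3⟩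
    simp only [Metric.mem_closedBall, dist_zero_right]
    have := Complex.norm_le_abs_re_add_abs_im z
    rw [_root_.abs_of_nonneg h1, _root_.abs_of_nonneg h2] at this
    linarith

def Tmap (u v w : ℂ) : ℂ → ℂ := fun z => u + ((z.re:ℝ):ℂ) * (v - u) + ((z.im:ℝ):ℂ) * (w - u)

lemma Tmap_continuous (u v w : ℂ) : Continuous (Tmap u v w) := by
  apply Continuous.add
  apply Continuous.add continuous_const
  · exact (Complex.continuous_ofReal.comp Complex.continuous_re).mul continuous_const
  · exact (Complex.continuous_ofReal.comp Complex.continuous_im).mul continuous_const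

lemma T_eq_image (u v w : ℂ) : T u v w = Tmap u v w '' Δ := by
  ext z
  constructor
  · rintro ⟨b, c, hb, hc, hbc, rfl⟩
    refine ⟨⟨b, c⟩, ⟨by simpa using hb, by simpa using hc, by simpa using hbc⟩, ?_⟩
    simp [Tmap]
  · rintro ⟨x, ⟨h1, h2, h3⟩, rfl⟩
    exact ⟨x.re, x.im, h1, h2, h3, rfl⟩

lemma T_isCompact (u v w : ℂ) : IsCompact (T u v w) := by
  rw [T_eq_image]
  exact Δ_isCompact.image (Tmap_continuous u v w)

lemma R_isCompact (n k : ℕ) : IsCompact (R n k) := T_isCompact _ _ _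
lemma R_isClosed (n k : ℕ) : IsClosed (R n k) := (R_isCompact n k).isClosed

-- ### the arc
def idx (n : ℕ) (t : ℝ) : ℕ := min ⌊(2:ℝ)^n * t⌋₊ (2^n - 1)

lemma idx_lt (n : ℕ) (t : ℝ) : idx n t < 2^n := by
  have h := Nat.one_le_two_pow (n := n)
  simp only [idx]
  omega

lemma idx_div (n : ℕ) (t : ℝ) : idx (n+1) t / 2 = idx n t := by
  have h1 : (⌊(2:ℝ)^(n+1) * t⌋₊) / 2 = ⌊(2:ℝ)^n * t⌋₊ := by
    rw [← Nat.floor_div_natCast]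
    congr 1
    rw [pow_succ]
    ring
  have h2 : (2:ℕ)^(n+1) = 2 * 2^n := by rw [pow_succ]; ring
  have h3 := Nat.one_le_two_pow (n := n)
  simp only [idx]
  omega

def pt (n : ℕ) (t : ℝ) : ℂ := U n (idx n t)

lemma pt_mem (n : ℕ) (t : ℝ) : pt n t ∈ R n (idx n t) := U_mem_R _ _

lemma R_subset_of_le {n m : ℕ} (h : n ≤ m) (t : ℝ) :
    R m (idx m t) ⊆ R n (idx n t) := by
  induction m, h using Nat.le_induction with
  | base => exact subset_rfl
  | succ m hm ih =>
    refine subset_trans ?_ ih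
    rw [← idx_div m t]
    exact R_succ_subset _ _

lemma pt_mem_of_le {n m : ℕ} (h : n ≤ m) (t : ℝ) : pt m t ∈ R n (idx n t) :=
  R_subset_of_le h t (pt_mem m t)

lemma pt_cauchy (t : ℝ) : CauchySeq (fun n => pt n t) := by
  apply cauchySeq_of_le_geometric (3/4) 2 (by norm_num)
  intro n
  rw [dist_eq_norm]
  exact R_diam (pt_mem n t) (pt_mem_of_le (Nat.le_succ n) t)

def γA (t : ℝ) : ℂ := Filter.limUnder Filter.atTop (fun n => pt n t)

lemma γA_tendsto (t : ℝ) :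
    Filter.Tendsto (fun n => pt n t) Filter.atTop (nhds (γA t)) :=
  (pt_cauchy t).tendsto_limUnder

lemma γA_mem (n : ℕ) (t : ℝ) : γA t ∈ R n (idx n t) := by
  apply (R_isClosed n (idx n t)).mem_of_tendsto (γA_tendsto t)
  filter_upwards [Filter.eventually_ge_atTop n] with m hm
  exact pt_mem_of_le hm t

-- index monotonicity / adjacency
lemma idx_mono (n : ℕ) {t s : ℝ} (h : t ≤ s) : idx n t ≤ idx n s := by
  have : ⌊(2:ℝ)^n * t⌋₊ ≤ ⌊(2:ℝ)^n * s⌋₊ :=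
    Nat.floor_le_floor (by nlinarith [pow_pos (show (0:ℝ) < 2 by norm_num) n])
  simp only [idx]
  omega

lemma idx_adj (n : ℕ) {t s : ℝ} (h : t ≤ s) (h2 : s - t ≤ (1/2)^n) :
    idx n s ≤ idx n t + 1 := by
  have hfl : ⌊(2:ℝ)^n * s⌋₊ ≤ ⌊(2:ℝ)^n * t⌋₊ + 1 := by
    rcases le_or_gt ((2:ℝ)^n * s) 0 with hs | hs
    · rw [Nat.floor_of_nonpos hs]; omega
    · have hpow : (0:ℝ) < (2:ℝ)^n := by positivity
      have hprod : (2:ℝ)^n * (1/2)^n = 1 := by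
        rw [← mul_pow]; norm_num
      have hkey : (2:ℝ)^n * s ≤ (2:ℝ)^n * t + 1 := by nlinarith
      rcases le_or_gt 0 ((2:ℝ)^n * t) with ht | ht
      · calc ⌊(2:ℝ)^n * s⌋₊ ≤ ⌊(2:ℝ)^n * t + 1⌋₊ := Nat.floor_le_floor hkey
        _ = ⌊(2:ℝ)^n * t⌋₊ + 1 := by
            exact_mod_cast Nat.floor_add_one ht
      · have : (2:ℝ)^n * s < 1 := by linarith
        have : ⌊(2:ℝ)^n * s⌋₊ = 0 := Nat.floor_eq_zero.mpr this
        omega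
  simp only [idx]
  omega

lemma idx_far (n : ℕ) {t s : ℝ} (ht : 0 ≤ t) (hs : s ≤ 1)
    (h : t + 3*(1/2)^n ≤ s) : idx n t + 2 ≤ idx n s := by
  have hpow : (0:ℝ) < (2:ℝ)^n := by positivity
  have hprod : (2:ℝ)^n * (1/2)^n = 1 := by rw [← mul_pow]; norm_num
  have hn1 : 3*(1/2:ℝ)^n ≤ 1 := by linarith
  -- n ≥ 2, so 2^n ≥ 4
  have hn4 : (4:ℕ) ≤ 2^n := by
    match n, hn1 with
    | 0, hn1 => norm_num at hn1
    | 1, hn1 => norm_num at hn1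
    | (m+2), _ =>
      have : (4:ℕ) = 2^2 := by norm_num
      rw [this]
      exact Nat.pow_le_pow_right (by norm_num) (by omega)
  have hfl1 : ⌊(2:ℝ)^n * t⌋₊ + 3 ≤ ⌊(2:ℝ)^n * s⌋₊ := by
    have h1 : ((⌊(2:ℝ)^n * t⌋₊ + 3 : ℕ) : ℝ) ≤ (2:ℝ)^n * s := by
      push_cast
      have := Nat.floor_le (by positivity : (0:ℝ) ≤ (2:ℝ)^n * t)
      nlinarith
    exact Nat.le_floor h1
  have hfl2 : ⌊(2:ℝ)^n * t⌋₊ ≤ 2^n - 3 := by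
    have h1 : (2:ℝ)^n * t ≤ ((2^n - 3 : ℕ) : ℝ) := by
      have hc : ((2^n - 3 : ℕ) : ℝ) = ((2^n : ℕ):ℝ) - 3 := by
        have : (3:ℕ) ≤ 2^n := by omega
        push_cast [Nat.cast_sub this]
        ring
      rw [hc]
      push_cast
      nlinarith
    calc ⌊(2:ℝ)^n * t⌋₊ ≤ ⌊((2^n - 3 : ℕ) : ℝ)⌋₊ := Nat.floor_le_floor h1
    _ = 2^n - 3 := Nat.floor_natCast _
  simp only [idx]
  omega

lemma γA_dist (n : ℕ) {t s : ℝ} (h : t ≤ s) (hd : s - t ≤ (1/2)^n) :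
    ‖γA s - γA t‖ ≤ 4*(3/4)^n := by
  have hle := idx_mono n h
  have hadj := idx_adj n h hd
  have hpos : (0:ℝ) ≤ (3/4)^n := by positivity
  rcases (by omega : idx n s = idx n t ∨ idx n s = idx n t + 1) with he | he
  · have h1 := γA_mem n s
    rw [he] at h1
    have := R_diam h1 (γA_mem n t)
    linarith
  · have hlt : idx n t + 1 < 2^n := by
      have := idx_lt n s; omega
    have hchain : V n (idx n t) = U n (idx n t + 1) := chain n (idx n t) hlt
    have h1 : ‖γA t - V n (idx n t)‖ ≤ 2*(3/4)^n :=
      R_diam (γA_mem n t) (V_mem_R n (idx n t))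
    have h2 : ‖γA s - U n (idx n s)‖ ≤ 2*(3/4)^n :=
      R_diam (γA_mem n s) (U_mem_R n (idx n s))
    rw [he] at h2
    rw [← hchain] at h2
    calc ‖γA s - γA t‖ = ‖(γA s - V n (idx n t)) - (γA t - V n (idx n t))‖ := by ring_nf
    _ ≤ ‖γA s - V n (idx n t)‖ + ‖γA t - V n (idx n t)‖ := norm_sub_le _ _
    _ ≤ 4*(3/4)^n := by linarith

lemma γA_continuous : Continuous γA := by
  rw [Metric.continuous_iff]
  intro t ε hε
  obtain ⟨n, hn⟩ := exists_pow_lt_of_lt_one (show (0:ℝ) < ε/4 by linarith)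
    (show (3:ℝ)/4 < 1 by norm_num)
  refine ⟨(1/2)^n, by positivity, fun s hst => ?_⟩
  have key : ‖γA s - γA t‖ ≤ 4*(3/4)^n := by
    rcases le_total t s with h | h
    · apply γA_dist n h
      rw [dist_eq_norm] at hst
      have := le_abs_self (s - t)
      rw [Real.norm_eq_abs] at hst
      linarith [hst.le]
    · have h1 := γA_dist n h (by
        rw [dist_eq_norm, Real.norm_eq_abs] at hst
        have := abs_sub_comm s t
        have h2 := le_abs_self (t - s)
        linarith [hst.le])
      rw [norm_sub_rev]
      exact h1
  rw [dist_eq_norm]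
  linarith

lemma γA_injOn : Set.InjOn γA (Set.Icc 0 1) := by
  have key : ∀ t s : ℝ, t ∈ Set.Icc (0:ℝ) 1 → s ∈ Set.Icc (0:ℝ) 1 → t < s → γA t ≠ γA s := by
    intro t s ht hs hts heq
    obtain ⟨n, hn⟩ := exists_pow_lt_of_lt_one (show (0:ℝ) < (s-t)/3 by linarith)
      (show (1:ℝ)/2 < 1 by norm_num)
    have hfar : idx n t + 2 ≤ idx n s := idx_far n ht.1 hs.2 (by linarith)
    have h1 := γA_mem n t
    have h2 := γA_mem n s
    rw [← heq] at h2
    obtain ⟨hadj, _⟩ := same_level n (idx n t) (idx n s) (γA t) (by omega) (idx_lt n s) h1 h2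
    omega
  intro t ht s hs heq
  rcases lt_trichotomy t s with h | h | h
  · exact absurd heq (key t s ht hs h)
  · exact h
  · exact absurd heq.symm (key s t hs ht h)

lemma idx_zero (n : ℕ) : idx n 0 = 0 := by
  simp [idx]

lemma γA_zero : γA 0 = 0 := by
  refine tendsto_nhds_unique (γA_tendsto 0) ?_
  have : (fun n => pt n 0) = fun _ => (0:ℂ) := by
    funext n
    rw [pt, idx_zero, U_zero]
  rw [this]
  exact tendsto_const_nhds

lemma idx_one (n : ℕ) : idx n 1 = 2^n - 1 := by
  simp only [idx, mul_one]
  have h : ((2:ℝ))^n = ((2^n : ℕ) : ℝ) := by push_cast; ring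
  rw [h, Nat.floor_natCast]
  exact min_eq_right (Nat.sub_le _ _)

lemma γA_one : γA 1 = 1 := by
  refine tendsto_nhds_unique (γA_tendsto 1) ?_
  rw [tendsto_iff_dist_tendsto_zero]
  have hb : ∀ n : ℕ, dist (pt n 1) 1 ≤ (3/4)^n := by
    intro n
    rw [dist_eq_norm, pt, idx_one, ← V_last n, norm_sub_rev]
    exact node_len n _
  exact squeeze_zero (fun n => dist_nonneg) hb
    (tendsto_pow_atTop_nhds_zero_of_lt_one (by norm_num) (by norm_num))

lemma γA_im_nonneg (t : ℝ) : 0 ≤ (γA t).im := by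
  have h := γA_mem 0 t
  have h0 : idx 0 t = 0 := by
    have := idx_lt 0 t
    omega
  rw [h0] at h
  obtain ⟨b, c, hb, hc, hbc, heq⟩ := h
  have hU : U 0 0 = 0 := by simp [U, node]
  have hV : V 0 0 = 1 := by simp [V, node]
  have hW : W 0 0 = (1+I)/2 := by simp [W, node]
  rw [hU, hV, hW] at heq
  rw [heq]
  simp [Complex.add_im, Complex.mul_im, Complex.div_im]
  nlinarith

lemma γA_dyadic (n k : ℕ) (hk : k < 2^n) : γA ((k:ℝ)/2^n) ∈ R n k := by
  have hidx : idx n ((k:ℝ)/2^n) = k := by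
    have hpow : (0:ℝ) < (2:ℝ)^n := by positivity
    have : (2:ℝ)^n * ((k:ℝ)/2^n) = (k:ℝ) := by field_simp
    simp only [idx, this, Nat.floor_natCast]
    omega
  have := γA_mem n ((k:ℝ)/2^n)
  rwa [hidx] at this

-- ### measure computations
def Lmap (e f : ℂ) : ℂ →ₗ[ℝ] ℂ where
  toFun z := ((z.re:ℝ):ℂ) * e + ((z.im:ℝ):ℂ) * f
  map_add' z₁ z₂ := by
    simp only [Complex.add_re, Complex.add_im]
    push_cast
    ring
  map_smul' m z := by
    simp only [Complex.real_smul, Complex.mul_re, Complex.mul_im, Complex.ofReal_re,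
      Complex.ofReal_im, RingHom.id_apply]
    push_cast
    ring

lemma Lmap_det (e f : ℂ) : LinearMap.det (Lmap e f) = cross e f := by
  rw [← LinearMap.det_toMatrix Complex.basisOneI]
  have hm : LinearMap.toMatrix Complex.basisOneI Complex.basisOneI (Lmap e f)
      = Matrix.of ![![e.re, f.re], ![e.im, f.im]] := by
    ext i j
    rw [LinearMap.toMatrix_apply]
    fin_cases i <;> fin_cases j <;>
      simp [Lmap, Complex.coe_basisOneI, Complex.coe_basisOneI_repr]
  rw [hm]
  rw [Matrix.det_fin_two]
  simp only [Matrix.of_apply, Matrix.cons_val', Matrix.cons_val_zero, Matrix.cons_val_one,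
    Matrix.head_cons, Matrix.empty_val', Matrix.cons_val_fin_one, Matrix.head_fin_const, cross]
  ring

lemma T_eq_add_image (u v w : ℂ) :
    T u v w = (fun z => u + z) '' (Lmap (v-u) (w-u) '' Δ) := by
  rw [T_eq_image, ← Set.image_comp]
  apply Set.image_congr'
  intro z
  simp only [Tmap, Lmap, Function.comp_apply, LinearMap.coe_mk, AddHom.coe_mk]
  ring

lemma volume_T (u v w : ℂ) :
    volume (T u v w) = ENNReal.ofReal |cross (v-u) (w-u)| * volume Δ := by
  rw [T_eq_add_image]
  have h1 : (fun z => u + z) '' (Lmap (v-u) (w-u) '' Δ)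
      = (fun z => -u + z) ⁻¹' (Lmap (v-u) (w-u) '' Δ) := by
    ext z
    simp only [Set.mem_image, Set.mem_preimage]
    constructor
    · rintro ⟨a, ha, rfl⟩
      simpa using ha
    · intro h
      exact ⟨-u + z, h, by ring⟩
  rw [h1, measure_preimage_add, Measure.addHaar_image_linearMap, Lmap_det]

lemma volume_Δ_pos : 0 < volume Δ := by
  have hopen : IsOpen {z : ℂ | 0 < z.re ∧ 0 < z.im ∧ z.re + z.im < 1} := by
    have h1 : IsOpen {z : ℂ | 0 < z.re} := isOpen_lt continuous_const Complex.continuous_re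
    have h2 : IsOpen {z : ℂ | 0 < z.im} := isOpen_lt continuous_const Complex.continuous_im
    have h3 : IsOpen {z : ℂ | z.re + z.im < 1} :=
      isOpen_lt (Complex.continuous_re.add Complex.continuous_im) continuous_const
    exact h1.inter (h2.inter h3)
  have hne : {z : ℂ | 0 < z.re ∧ 0 < z.im ∧ z.re + z.im < 1}.Nonempty := by
    refine ⟨(1/4 : ℝ) + (1/4 : ℝ) * I, ?_⟩
    norm_num [Complex.add_re, Complex.add_im, Complex.ofReal_re, Complex.ofReal_im]
  have hsub : {z : ℂ | 0 < z.re ∧ 0 < z.im ∧ z.re + z.im < 1} ⊆ Δ := by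
    rintro z ⟨h1, h2, h3⟩
    exact ⟨h1.le, h2.le, h3.le⟩
  exact lt_of_lt_of_le (hopen.measure_pos volume hne) (measure_mono hsub)

lemma volume_Δ_fin : volume Δ < ⊤ := Δ_isCompact.measure_lt_top

lemma volume_R (n k : ℕ) :
    volume (R n k) = ENNReal.ofReal ((1/2) * ∏ j ∈ Finset.range n, alp j) * volume Δ := by
  rw [R, volume_T, node_cross]
  congr 2
  have hp := prod_alp_pos n
  rcases Nat.even_or_odd n with he | ho
  · rw [he.neg_one_pow]
    rw [_root_.abs_of_nonneg (by linarith)]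
    ring
  · rw [ho.neg_one_pow]
    rw [_root_.abs_of_nonpos (by nlinarith)]
    ring

def Kn (n : ℕ) : Set ℂ := ⋃ k ∈ Finset.range (2^n), R n k

lemma Kn_antitone : Antitone Kn := by
  apply antitone_nat_of_succ_le
  intro n z hz
  simp only [Kn, Set.mem_iUnion, Finset.mem_range] at hz ⊢
  obtain ⟨k, hk, hzk⟩ := hz
  refine ⟨k/2, ?_, R_succ_subset n k hzk⟩
  have : (2:ℕ)^(n+1) = 2*2^n := by rw [pow_succ]; ring
  omega

lemma Kn_nullmeasurable (n : ℕ) : NullMeasurableSet (Kn n) volume := by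
  apply MeasurableSet.nullMeasurableSet
  apply MeasurableSet.biUnion (Finset.countable_toSet _)
  intro k _
  exact (R_isClosed n k).measurableSet

lemma volume_Kn (n : ℕ) :
    volume (Kn n) = (2^n : ℕ) * (ENNReal.ofReal ((1/2) * ∏ j ∈ Finset.range n, alp j) * volume Δ) := by
  rw [Kn, measure_biUnion_finset₀]
  · rw [Finset.sum_congr rfl (fun k _ => volume_R n k), Finset.sum_const, Finset.card_range,
      nsmul_eq_mul]
  · -- pairwise AEDisjoint
    intro k hk l hl hkl
    have key : ∀ a b : ℕ, a < b → b < 2^n → volume (R n a ∩ R n b) = 0 := by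
      intro a b hab hb
      refine measure_mono_null ?_ (measure_singleton (V n a))
      intro z ⟨hza, hzb⟩
      exact (same_level n a b z hab hb hza hzb).2
    simp only [Finset.mem_coe, Finset.mem_range] at hk hl
    rcases lt_or_gt_of_ne hkl with h | h
    · exact key k l h hl
    · show volume (R n k ∩ R n l) = 0
      rw [Set.inter_comm]
      exact key l k h hk
  · intro k _
    exact (R_isClosed n k).measurableSet.nullMeasurableSet

lemma prod_one_sub_eps_ge (n : ℕ) :
    (1:ℝ)/2 + 2*(1/2)^(n+7) ≤ ∏ j ∈ Finset.range n, (1 - eps j) := by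
  induction n with
  | zero => norm_num
  | succ n ih =>
    rw [Finset.prod_range_succ]
    have ha : (0:ℝ) < (1/2)^(n+7) := by positivity
    have ha2 : ((1:ℝ)/2)^(n+7) ≤ (1/2:ℝ)^2 := by
      apply pow_le_pow_of_le_one (by norm_num) (by norm_num)
      omega
    have heps : eps n = (1/2)^(n+7) := rfl
    have h78 : ((1:ℝ)/2)^(n+1+7) = (1/2)^(n+7) * (1/2) := by rw [← pow_succ]
    have hprodpos : (0:ℝ) ≤ 1/2 + 2*(1/2)^(n+7) := by positivity
    calc (1:ℝ)/2 + 2*(1/2)^(n+1+7)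
        ≤ (1/2 + 2*(1/2)^(n+7)) * (1 - (1/2)^(n+7)) := by rw [h78]; nlinarith
    _ ≤ (∏ j ∈ Finset.range n, (1 - eps j)) * (1 - eps n) := by
        rw [heps]
        apply mul_le_mul ih (le_refl _) (by norm_num at ha2 ⊢; linarith) (by linarith [ih])
    _ = _ := rfl

lemma volume_Kn_ge (n : ℕ) :
    ENNReal.ofReal (1/4) * volume Δ ≤ volume (Kn n) := by
  rw [volume_Kn n, ← mul_assoc]
  apply mul_le_mul_left _ (volume Δ)
  have h1 : ((2^n : ℕ) : ENNReal) * ENNReal.ofReal ((1/2) * ∏ j ∈ Finset.range n, alp j)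
      = ENNReal.ofReal ((2:ℝ)^n * ((1/2) * ∏ j ∈ Finset.range n, alp j)) := by
    rw [ENNReal.ofReal_mul (by positivity : (0:ℝ) ≤ (2:ℝ)^n)]
    congr 1
    rw [← ENNReal.ofReal_natCast (2^n)]
    congr 1
    push_cast
    ring
  rw [h1]
  apply ENNReal.ofReal_le_ofReal
  have hprod : ∏ j ∈ Finset.range n, (1 - eps j)
      = (2:ℝ)^n * ∏ j ∈ Finset.range n, alp j := by
    calc ∏ j ∈ Finset.range n, (1 - eps j) = ∏ j ∈ Finset.range n, (2 * alp j) := by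
          apply Finset.prod_congr rfl
          intro j _
          simp only [alp]
          ring
    _ = (∏ j ∈ Finset.range n, (2:ℝ)) * ∏ j ∈ Finset.range n, alp j :=
          Finset.prod_mul_distrib
    _ = (2:ℝ)^n * ∏ j ∈ Finset.range n, alp j := by
          rw [Finset.prod_const, Finset.card_range]
  have hge := prod_one_sub_eps_ge n
  have hpos : (0:ℝ) < (1/2)^(n+7) := by positivity
  nlinarith [hge, hpos, hprod]

-- ### the Cantor-type set K and its measure
def K : Set ℂ := ⋂ n, Kn n

lemma volume_Kn0_fin : volume (Kn 0) ≠ ⊤ := by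
  rw [volume_Kn 0]
  exact ENNReal.mul_ne_top (by simp) (ENNReal.mul_ne_top ENNReal.ofReal_ne_top volume_Δ_fin.ne)

lemma volume_K_ge : ENNReal.ofReal (1/4) * volume Δ ≤ volume K := by
  have htend := tendsto_measure_iInter_atTop (μ := volume)
    Kn_nullmeasurable Kn_antitone ⟨0, volume_Kn0_fin⟩
  exact ge_of_tendsto htend (Filter.Eventually.of_forall volume_Kn_ge)

lemma K_subset_image : K ⊆ γA '' Set.Icc 0 1 := by
  intro z hz
  have hcompact : IsCompact (γA '' Set.Icc 0 1) := isCompact_Icc.image γA_continuous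
  rw [← hcompact.isClosed.closure_eq]
  rw [Metric.mem_closure_iff]
  intro ε hε
  obtain ⟨n, hn⟩ := exists_pow_lt_of_lt_one (show (0:ℝ) < ε/2 by linarith)
    (show (3:ℝ)/4 < 1 by norm_num)
  have hzn := Set.mem_iInter.mp hz n
  simp only [Kn, Set.mem_iUnion, Finset.mem_range] at hzn
  obtain ⟨k, hk, hzk⟩ := hzn
  refine ⟨γA ((k:ℝ)/2^n), ⟨(k:ℝ)/2^n, ⟨by positivity, ?_⟩, rfl⟩, ?_⟩
  · rw [div_le_one (by positivity)]
    have h2 : (k:ℝ) ≤ ((2^n : ℕ):ℝ) := by exact_mod_cast hk.le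
    push_cast at h2
    linarith
  · rw [dist_eq_norm]
    have hd := R_diam hzk (γA_dyadic n k hk)
    calc ‖z - γA ((k:ℝ)/2^n)‖ ≤ 2*(3/4)^n := hd
    _ < ε := by linarith

lemma volume_image_pos : 0 < volume (γA '' Set.Icc 0 1) := by
  calc (0:ENNReal) < ENNReal.ofReal (1/4) * volume Δ := by
        apply ENNReal.mul_pos
        · simp only [ne_eq, ENNReal.ofReal_eq_zero, not_le]
          norm_num
        · exact volume_Δ_pos.ne'
  _ ≤ volume K := volume_K_ge
  _ ≤ volume (γA '' Set.Icc 0 1) := measure_mono K_subset_image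

-- ### closing up the curve
def Gfun : ℝ → ℂ := fun t =>
  if t ≤ 1/3 then γA (3*t)
  else if t ≤ 2/3 then 1 + ((3*t - 1 : ℝ):ℂ) * (-(1/2) - I)
  else ((3 - 3*t : ℝ):ℂ) * ((1/2 : ℂ) - I)

lemma Gfun_arc {t : ℝ} (h : t ≤ 1/3) : Gfun t = γA (3*t) := if_pos h
lemma Gfun_mid {t : ℝ} (h1 : ¬ t ≤ 1/3) (h2 : t ≤ 2/3) :
    Gfun t = 1 + ((3*t - 1 : ℝ):ℂ) * (-(1/2) - I) := by
  rw [Gfun]; rw [if_neg h1, if_pos h2]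
lemma Gfun_last {t : ℝ} (h1 : ¬ t ≤ 1/3) (h2 : ¬ t ≤ 2/3) :
    Gfun t = ((3 - 3*t : ℝ):ℂ) * ((1/2 : ℂ) - I) := by
  rw [Gfun]; rw [if_neg h1, if_neg h2]

lemma mid_im (t : ℝ) : (1 + ((3*t - 1 : ℝ):ℂ) * (-(1/2) - I)).im = -(3*t - 1) := by
  simp [Complex.add_im, Complex.mul_im]
lemma mid_re (t : ℝ) : (1 + ((3*t - 1 : ℝ):ℂ) * (-(1/2) - I)).re = 1 - (3*t - 1)/2 := by
  simp [Complex.add_re, Complex.mul_re]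
  ring
lemma last_im (t : ℝ) : (((3 - 3*t : ℝ):ℂ) * ((1/2 : ℂ) - I)).im = -(3 - 3*t) := by
  simp [Complex.mul_im]
lemma last_re (t : ℝ) : (((3 - 3*t : ℝ):ℂ) * ((1/2 : ℂ) - I)).re = (3 - 3*t)/2 := by
  simp [Complex.mul_re]
  ring

lemma Gfun_continuous : Continuous Gfun := by
  have hmid : Continuous (fun t : ℝ => 1 + ((3*t - 1 : ℝ):ℂ) * (-(1/2) - I)) := by
    apply continuous_const.add
    apply Continuous.mul _ continuous_const
    exact Complex.continuous_ofReal.comp (by continuity)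
  have hlast : Continuous (fun t : ℝ => ((3 - 3*t : ℝ):ℂ) * ((1/2 : ℂ) - I)) := by
    apply Continuous.mul _ continuous_const
    exact Complex.continuous_ofReal.comp (by continuity)
  have harc : Continuous (fun t : ℝ => γA (3*t)) :=
    γA_continuous.comp (by continuity)
  apply Continuous.if_le harc _ continuous_id continuous_const
  · -- boundary t = 1/3
    intro t ht
    simp only [id_eq] at ht
    subst ht
    rw [if_pos (by norm_num : (1:ℝ)/3 ≤ 2/3)]
    rw [show (3:ℝ)*(1/3) = 1 by norm_num, γA_one]
    norm_num
  · apply Continuous.if_le hmid hlast continuous_id continuous_const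
    intro t ht
    simp only [id_eq] at ht
    subst ht
    norm_num
    ring

lemma Gfun_zero : Gfun 0 = 0 := by
  rw [Gfun_arc (by norm_num)]
  simpa using γA_zero

lemma Gfun_one : Gfun 1 = 0 := by
  rw [Gfun_last (by norm_num) (by norm_num)]
  norm_num

lemma Gfun_injOn : Set.InjOn Gfun (Set.Ico 0 1) := by
  intro x hx y hy heq
  obtain ⟨hx0, hx1⟩ := hx
  obtain ⟨hy0, hy1⟩ := hy
  -- helper: images in different branches are distinct
  by_cases hxa : x ≤ 1/3 <;> by_cases hya : y ≤ 1/3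
  · -- both arc
    rw [Gfun_arc hxa, Gfun_arc hya] at heq
    have := γA_injOn ⟨by linarith, by linarith⟩ ⟨by linarith, by linarith⟩ heq
    linarith
  · -- x arc, y not arc: contradiction via im
    exfalso
    have him : 0 ≤ (Gfun x).im := by
      rw [Gfun_arc hxa]; exact γA_im_nonneg _
    rw [heq] at him
    by_cases hyb : y ≤ 2/3
    · rw [Gfun_mid hya hyb, mid_im] at him
      push_neg at hya
      linarith
    · rw [Gfun_last hya hyb, last_im] at him
      linarith
  · -- y arc, x not arc
    exfalso
    have him : 0 ≤ (Gfun y).im := by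
      rw [Gfun_arc hya]; exact γA_im_nonneg _
    rw [← heq] at him
    by_cases hxb : x ≤ 2/3
    · rw [Gfun_mid hxa hxb, mid_im] at him
      push_neg at hxa
      linarith
    · rw [Gfun_last hxa hxb, last_im] at him
      linarith
  · -- neither arc
    by_cases hxb : x ≤ 2/3 <;> by_cases hyb : y ≤ 2/3
    · -- both mid
      rw [Gfun_mid hxa hxb, Gfun_mid hya hyb] at heq
      have := congrArg Complex.im heq
      rw [mid_im, mid_im] at this
      linarith
    · -- x mid, y last
      exfalso
      rw [Gfun_mid hxa hxb, Gfun_last hya hyb] at heq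
      have h1 := congrArg Complex.im heq
      have h2 := congrArg Complex.re heq
      rw [mid_im, last_im] at h1
      rw [mid_re, last_re] at h2
      push_neg at hyb
      linarith
    · -- x last, y mid
      exfalso
      rw [Gfun_last hxa hxb, Gfun_mid hya hyb] at heq
      have h1 := congrArg Complex.im heq
      have h2 := congrArg Complex.re heq
      rw [last_im, mid_im] at h1
      rw [last_re, mid_re] at h2
      push_neg at hxb
      linarith
    · -- both last
      rw [Gfun_last hxa hxb, Gfun_last hya hyb] at heq
      have h1 := congrArg Complex.im heq
      rw [last_im, last_im] at h1
      linarith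

lemma arc_subset_Gfun_image : γA '' Set.Icc 0 1 ⊆ Gfun '' Set.Ico 0 1 := by
  rintro z ⟨t, ⟨ht0, ht1⟩, rfl⟩
  refine ⟨t/3, ⟨by linarith, by linarith⟩, ?_⟩
  rw [Gfun_arc (by linarith)]
  congr 1
  ring

-- ### assembly on the circle
instance fact_one_pos : Fact ((0:ℝ) < 1) := ⟨one_pos⟩

def Gcirc : AddCircle (1:ℝ) → ℂ := AddCircle.liftIco 1 0 Gfun

lemma Gcirc_continuous : Continuous Gcirc := by
  apply AddCircle.liftIco_continuous
  · rw [Gfun_zero, zero_add, Gfun_one]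
  · exact Gfun_continuous.continuousOn

lemma Gcirc_injective : Function.Injective Gcirc := by
  intro x y h
  have hx : ((AddCircle.equivIco 1 0 x) : ℝ) ∈ Set.Ico (0:ℝ) 1 := by
    simpa using (AddCircle.equivIco 1 0 x).2
  have hy : ((AddCircle.equivIco 1 0 y) : ℝ) ∈ Set.Ico (0:ℝ) 1 := by
    simpa using (AddCircle.equivIco 1 0 y).2
  have hGx : Gcirc x = Gfun ((AddCircle.equivIco 1 0 x) : ℝ) := rfl
  have hGy : Gcirc y = Gfun ((AddCircle.equivIco 1 0 y) : ℝ) := rfl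
  rw [hGx, hGy] at h
  have := Gfun_injOn hx hy h
  have h2 : (AddCircle.equivIco 1 0 x) = (AddCircle.equivIco 1 0 y) := Subtype.ext this
  exact (AddCircle.equivIco 1 0).injective h2

lemma Gcirc_range : Set.range Gcirc = Gfun '' Set.Ico 0 1 := by
  have h1 : Set.range Gcirc = Set.range ((Set.Ico (0:ℝ) (0+1)).restrict Gfun) := by
    rw [Gcirc, AddCircle.liftIco]
    exact (AddCircle.equivIco 1 0).surjective.range_comp _
  rw [h1, zero_add]
  exact Set.range_domRestrict Gfun _

end Osgood

open Osgood in
/-- Osgood: there exists a Jordan curve in `ℂ` whose trace has positive two-dimensional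
Lebesgue measure. -/
theorem exists_jordan_curve_positive_measure :
    ∃ γ : Circle → ℂ, Continuous γ ∧ Function.Injective γ ∧
      0 < volume (Set.range γ) := by
  classical
  let H : AddCircle (1:ℝ) ≃ₜ Circle := AddCircle.homeomorphCircle one_ne_zero
  refine ⟨Gcirc ∘ H.symm, Gcirc_continuous.comp H.symm.continuous,
    Gcirc_injective.comp H.symm.injective, ?_⟩
  have hrange : Set.range (Gcirc ∘ H.symm) = Set.range Gcirc :=
    H.symm.surjective.range_comp Gcirc
  rw [hrange, Gcirc_range]
  calc (0:ENNReal) < volume (γA '' Set.Icc 0 1) := volume_image_pos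
  _ ≤ volume (Gfun '' Set.Ico 0 1) := measure_mono arc_subset_Gfun_image
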